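/- Let y ∈ (−1, 1) be real. Then the function t ↦ F(1, y, t) − F(1, y, t⁻¹) is strictly increasing on (0, ∞); more precisely, at every t > 0 this function has derivative 2·√(1 − y²)/(t² + 1 − 2·t·y). -/

import Mathlib

/-- `F(x, y, t) = arccos((x·y − t)/√(t² + x² − 2·t·x·y))`. -/
noncomputable def F (x y t : ℝ) : ℝ :=
  Real.arccos ((x * y - t) / Real.sqrt (t ^ 2 + x ^ 2 - 2 * t * x * y))


lemma alg (y t s s1 : ℝ) (hs : 0 < s) (hs1 : 0 < s1)
    (h2 : s ^ 2 = t ^ 2 + 1 - 2 * t * y) (h21 : s1 ^ 2 = 1 - y ^ 2) :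
    s1 / (t ^ 2 + 1 - 2 * t * y) =
      -(1 / (s1 / s)) * ((-1 * s - (y - t) * (1 / (2 * s) * (2 * t - 2 * y))) / s ^ 2) := by
  rw [← h2]
  field_simp
  linear_combination h21 - h2

lemma key (y : ℝ) (hy : y ∈ Set.Ioo (-1 : ℝ) 1) (t : ℝ) :
    HasDerivAt (fun t => F 1 y t) (Real.sqrt (1 - y ^ 2) / (t ^ 2 + 1 - 2 * t * y)) t := by
  obtain ⟨hy1, hy2⟩ := hy
  have hy2' : 0 < 1 - y ^ 2 := by nlinarith
  have hD : 0 < t ^ 2 + 1 - 2 * t * y := by nlinarith [sq_nonneg (t - y)]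
  set D : ℝ := t ^ 2 + 1 - 2 * t * y with hDdef
  have hs : 0 < Real.sqrt D := Real.sqrt_pos.2 hD
  have hsq : Real.sqrt D ^ 2 = D := Real.sq_sqrt hD.le
  have hs1 : 0 < Real.sqrt (1 - y ^ 2) := Real.sqrt_pos.2 hy2'
  have hsq1 : Real.sqrt (1 - y ^ 2) ^ 2 = 1 - y ^ 2 := Real.sq_sqrt hy2'.le
  -- inner function
  have hpoly : HasDerivAt (fun t : ℝ => t ^ 2 + 1 - 2 * t * y) (2 * t - 2 * y) t := by
    have h := ((hasDerivAt_pow 2 t).add_const (1 : ℝ)).sub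
      (((hasDerivAt_id t).const_mul 2).mul_const y)
    refine h.congr_deriv (Eq.symm ?_)
    ring
  have hsqrtD : HasDerivAt (fun t : ℝ => Real.sqrt (t ^ 2 + 1 - 2 * t * y))
      (1 / (2 * Real.sqrt D) * (2 * t - 2 * y)) t :=
    (Real.hasDerivAt_sqrt hD.ne').comp t hpoly
  have hnum : HasDerivAt (fun t : ℝ => y - t) (-1) t := by
    simpa using (hasDerivAt_id t).const_sub y
  have hg : HasDerivAt (fun t : ℝ => (y - t) / Real.sqrt (t ^ 2 + 1 - 2 * t * y))
      (((-1) * Real.sqrt D - (y - t) * (1 / (2 * Real.sqrt D) * (2 * t - 2 * y))) /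
        Real.sqrt D ^ 2) t :=
    hnum.div hsqrtD hs.ne'
  -- the value of g at t
  have hglt : ((y - t) / Real.sqrt D) ^ 2 < 1 := by
    rw [div_pow, hsq, div_lt_one hD]
    nlinarith
  have hne1 : (y - t) / Real.sqrt D ≠ -1 := by
    intro h; rw [h] at hglt; norm_num at hglt
  have hne2 : (y - t) / Real.sqrt D ≠ 1 := by
    intro h; rw [h] at hglt; norm_num at hglt
  have harccos := (Real.hasDerivAt_arccos hne1 hne2).comp t hg
  have hcomp : (fun t : ℝ => F 1 y t) =
      Real.arccos ∘ (fun t : ℝ => (y - t) / Real.sqrt (t ^ 2 + 1 - 2 * t * y)) := by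
    funext s
    simp only [F, Function.comp]
    norm_num
  rw [← hcomp] at harccos
  refine harccos.congr_deriv (Eq.symm ?_)
  -- now an algebraic identity
  have h1mg : 1 - ((y - t) / Real.sqrt D) ^ 2 = (1 - y ^ 2) / D := by
    rw [div_pow, hsq]
    field_simp
    ring
  have hsd : Real.sqrt ((1 - y ^ 2) / D) = Real.sqrt (1 - y ^ 2) / Real.sqrt D :=
    Real.sqrt_div hy2'.le _
  rw [h1mg, hsd]
  rw [hDdef] at hs hsq ⊢
  exact alg y t _ _ hs hs1 hsq hsq1

theorem stmt_3 (y : ℝ) (hy : y ∈ Set.Ioo (-1 : ℝ) 1) :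
    StrictMonoOn (fun t : ℝ => F 1 y t - F 1 y t⁻¹) (Set.Ioi (0 : ℝ)) ∧
    ∀ t : ℝ, 0 < t →
      HasDerivAt (fun t : ℝ => F 1 y t - F 1 y t⁻¹)
        (2 * Real.sqrt (1 - y ^ 2) / (t ^ 2 + 1 - 2 * t * y)) t := by
  obtain ⟨hy1, hy2⟩ := hy
  have hy2' : 0 < 1 - y ^ 2 := by nlinarith
  have hderiv : ∀ t : ℝ, 0 < t →
      HasDerivAt (fun t : ℝ => F 1 y t - F 1 y t⁻¹)
        (2 * Real.sqrt (1 - y ^ 2) / (t ^ 2 + 1 - 2 * t * y)) t := by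
    intro t ht
    have hD : 0 < t ^ 2 + 1 - 2 * t * y := by nlinarith [sq_nonneg (t - y)]
    have hD' : 0 < (t⁻¹) ^ 2 + 1 - 2 * t⁻¹ * y := by nlinarith [sq_nonneg (t⁻¹ - y)]
    have h1 := key y ⟨hy1, hy2⟩ t
    have hinv : HasDerivAt (fun t : ℝ => t⁻¹) (-(t ^ 2)⁻¹) t := hasDerivAt_inv ht.ne'
    have h2 := ((key y ⟨hy1, hy2⟩ t⁻¹).comp t hinv)
    have h3 := h1.sub h2
    refine h3.congr_deriv (Eq.symm ?_)
    have ht2 : (t : ℝ) ^ 2 ≠ 0 := by positivity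
    have hrw : (t⁻¹) ^ 2 + 1 - 2 * t⁻¹ * y = (t ^ 2 + 1 - 2 * t * y) / t ^ 2 := by
      field_simp
      ring
    rw [hrw]
    field_simp
    ring
  refine ⟨?_, hderiv⟩
  have hcont : ContinuousOn (fun t : ℝ => F 1 y t - F 1 y t⁻¹) (Set.Ioi (0 : ℝ)) :=
    fun x hx => ((hderiv x hx).differentiableAt.continuousAt).continuousWithinAt
  refine strictMonoOn_of_deriv_pos (convex_Ioi 0) hcont ?_
  intro x hx
  rw [interior_Ioi] at hx
  rw [(hderiv x hx).deriv]
  have hD : 0 < x ^ 2 + 1 - 2 * x * y := by nlinarith [sq_nonneg (x - y)]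
  positivity
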